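/- The logic N4CK has the Disjunction Property: for all formulas φ, ψ of the conditional language, φ ∨ ψ is valid in all Nelsonian conditional models if and only if at least one of φ, ψ is valid in all Nelsonian conditional models. -/
import Mathlib


inductive CForm : Type where
  | var : Nat → CForm
  | and : CForm → CForm → CForm
  | or  : CForm → CForm → CForm
  | neg : CForm → CForm
  | imp : CForm → CForm → CForm
  | cond : CForm → CForm → CForm

/-- A Nelsonian conditional model: a Nelsonian model together with a
bi-set-indexed accessibility relation satisfying (c1) and (c2). -/
structure CNModel where
  W : Type
  le : W → W → Prop
  refl : ∀ w, le w w
  trans : ∀ {a b c}, le a b → le b c → le a c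
  Vp : Nat → W → Prop
  Vn : Nat → W → Prop
  monoP : ∀ (n : Nat) {w v}, le w v → Vp n w → Vp n v
  monoN : ∀ (n : Nat) {w v}, le w v → Vn n w → Vn n v
  R : W → Set W × Set W → W → Prop
  c1 : ∀ (XY : Set W × Set W) {w w' v}, le w w' → R w XY v → ∃ v', R w' XY v' ∧ le v v'
  c2 : ∀ (XY : Set W × Set W) {w v v'}, R w XY v → le v v' → ∃ w', le w w' ∧ R w' XY v'

/-- Verification (`true`) and falsification (`false`) in a Nelsonian conditional model. -/
def CNModel.sat (M : CNModel) : CForm → Bool → M.W → Prop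
  | .var n, true, w => M.Vp n w
  | .var n, false, w => M.Vn n w
  | .and φ ψ, true, w => M.sat φ true w ∧ M.sat ψ true w
  | .and φ ψ, false, w => M.sat φ false w ∨ M.sat ψ false w
  | .or φ ψ, true, w => M.sat φ true w ∨ M.sat ψ true w
  | .or φ ψ, false, w => M.sat φ false w ∧ M.sat ψ false w
  | .neg φ, b, w => M.sat φ (!b) w
  | .imp φ ψ, true, w => ∀ v, M.le w v → M.sat φ true v → M.sat ψ true v
  | .imp φ ψ, false, w => M.sat φ true w ∧ M.sat ψ false w
  | .cond φ ψ, true, w =>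
      ∀ v u, M.le w v → M.R v ({x | M.sat φ true x}, {x | M.sat φ false x}) u →
        M.sat ψ true u
  | .cond φ ψ, false, w =>
      ∃ u, M.R w ({x | M.sat φ true x}, {x | M.sat φ false x}) u ∧ M.sat ψ false u

/-- N4CK-validity: verified at every world of every Nelsonian conditional model. -/
def CValid (φ : CForm) : Prop := ∀ (M : CNModel) (w : M.W), M.sat φ true w

/-- Persistence: both verification and falsification are monotone along `le`. -/
theorem CNModel.persist (M : CNModel) :
    ∀ (χ : CForm) (b : Bool) {w v : M.W}, M.le w v → M.sat χ b w → M.sat χ b v := by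
  intro χ
  induction χ with
  | var n =>
    intro b w v h hw
    cases b
    · exact M.monoN n h hw
    · exact M.monoP n h hw
  | and φ ψ ihφ ihψ =>
    intro b w v h hw
    cases b
    · rcases hw with hw | hw
      · exact Or.inl (ihφ false h hw)
      · exact Or.inr (ihψ false h hw)
    · exact ⟨ihφ true h hw.1, ihψ true h hw.2⟩
  | or φ ψ ihφ ihψ =>
    intro b w v h hw
    cases b
    · exact ⟨ihφ false h hw.1, ihψ false h hw.2⟩
    · rcases hw with hw | hw
      · exact Or.inl (ihφ true h hw)
      · exact Or.inr (ihψ true h hw)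
  | neg φ ih =>
    intro b w v h hw
    exact ih (!b) h hw
  | imp φ ψ ihφ ihψ =>
    intro b w v h hw
    cases b
    · exact ⟨ihφ true h hw.1, ihψ false h hw.2⟩
    · intro u hu hφ
      exact hw u (M.trans h hu) hφ
  | cond φ ψ ihφ ihψ =>
    intro b w v h hw
    cases b
    · obtain ⟨u, hR, hu⟩ := hw
      obtain ⟨u', hR', huu'⟩ := M.c1 _ h hR
      exact ⟨u', hR', ihψ false huu' hu⟩
    · intro v' u hle hR
      exact hw v' u (M.trans h hle) hR

/-- The glued model: disjoint union of two models with a fresh root below everything. -/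
def glue (M₁ M₂ : CNModel) : CNModel where
  W := Option (M₁.W ⊕ M₂.W)
  le w v :=
    match w, v with
    | none, _ => True
    | some (.inl a), some (.inl b) => M₁.le a b
    | some (.inr a), some (.inr b) => M₂.le a b
    | _, _ => False
  refl w := by
    rcases w with _ | (a | a)
    · trivial
    · exact M₁.refl a
    · exact M₂.refl a
  trans := by
    intro a b c hab hbc
    rcases a with _ | (a | a) <;> rcases b with _ | (b | b) <;> rcases c with _ | (c | c) <;>
      first
        | trivial
        | exact hab.elim
        | exact hbc.elim
        | exact M₁.trans hab hbc
        | exact M₂.trans hab hbc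
  Vp n w :=
    match w with
    | none => False
    | some (.inl a) => M₁.Vp n a
    | some (.inr a) => M₂.Vp n a
  Vn n w :=
    match w with
    | none => False
    | some (.inl a) => M₁.Vn n a
    | some (.inr a) => M₂.Vn n a
  monoP := by
    intro n w v hle h
    rcases w with _ | (a | a) <;> rcases v with _ | (b | b) <;>
      first
        | exact h.elim
        | exact hle.elim
        | exact M₁.monoP n hle h
        | exact M₂.monoP n hle h
  monoN := by
    intro n w v hle h
    rcases w with _ | (a | a) <;> rcases v with _ | (b | b) <;>
      first
        | exact h.elim
        | exact hle.elim
        | exact M₁.monoN n hle h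
        | exact M₂.monoN n hle h
  R w XY v :=
    match w, v with
    | some (.inl a), some (.inl b) =>
        M₁.R a ({x | some (Sum.inl x) ∈ XY.1}, {x | some (Sum.inl x) ∈ XY.2}) b
    | some (.inr a), some (.inr b) =>
        M₂.R a ({x | some (Sum.inr x) ∈ XY.1}, {x | some (Sum.inr x) ∈ XY.2}) b
    | _, _ => False
  c1 := by
    intro XY w w' v hle hR
    rcases w with _ | (a | a) <;> rcases w' with _ | (a' | a') <;> rcases v with _ | (b | b) <;>
      first
        | exact hR.elim
        | exact hle.elim
        | (obtain ⟨b', h1, h2⟩ := M₁.c1 _ hle hR; exact ⟨some (.inl b'), h1, h2⟩)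
        | (obtain ⟨b', h1, h2⟩ := M₂.c1 _ hle hR; exact ⟨some (.inr b'), h1, h2⟩)
  c2 := by
    intro XY w v v' hR hle
    rcases w with _ | (a | a) <;> rcases v with _ | (b | b) <;> rcases v' with _ | (b' | b') <;>
      first
        | exact hR.elim
        | exact hle.elim
        | (obtain ⟨a', h1, h2⟩ := M₁.c2 _ hR hle; exact ⟨some (.inl a'), h1, h2⟩)
        | (obtain ⟨a', h1, h2⟩ := M₂.c2 _ hR hle; exact ⟨some (.inr a'), h1, h2⟩)

theorem satInl (M₁ M₂ : CNModel) :
    ∀ (χ : CForm) (b : Bool) (a : M₁.W),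
      (glue M₁ M₂).sat χ b (some (.inl a)) ↔ M₁.sat χ b a := by
  intro χ
  induction χ with
  | var n => intro b a; cases b <;> exact Iff.rfl
  | and φ ψ ihφ ihψ =>
    intro b a; cases b <;> simp only [CNModel.sat, ihφ, ihψ]
  | or φ ψ ihφ ihψ =>
    intro b a; cases b <;> simp only [CNModel.sat, ihφ, ihψ]
  | neg φ ih =>
    intro b a; exact ih (!b) a
  | imp φ ψ ihφ ihψ =>
    intro b a; cases b
    · simp only [CNModel.sat, ihφ, ihψ]
    · constructor
      · intro h v₀ hle hφ
        exact (ihψ true v₀).mp (h (some (.inl v₀)) hle ((ihφ true v₀).mpr hφ))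
      · intro h v hle hφ
        rcases v with _ | (v₀ | v₀)
        · exact hle.elim
        · exact (ihψ true v₀).mpr (h v₀ hle ((ihφ true v₀).mp hφ))
        · exact hle.elim
  | cond φ ψ ihφ ihψ =>
    intro b a
    have h1 : {x : M₁.W | (glue M₁ M₂).sat φ true (some (Sum.inl x))}
        = {x | M₁.sat φ true x} := Set.ext fun x => ihφ true x
    have h2 : {x : M₁.W | (glue M₁ M₂).sat φ false (some (Sum.inl x))}
        = {x | M₁.sat φ false x} := Set.ext fun x => ihφ false x
    cases b
    · constructor
      · rintro ⟨u, hR, hu⟩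
        rcases u with _ | (u₀ | u₀)
        · exact hR.elim
        · refine ⟨u₀, ?_, (ihψ false u₀).mp hu⟩
          have hR' : M₁.R a ({x | (glue M₁ M₂).sat φ true (some (Sum.inl x))},
              {x | (glue M₁ M₂).sat φ false (some (Sum.inl x))}) u₀ := hR
          rwa [h1, h2] at hR'
        · exact hR.elim
      · rintro ⟨u₀, hR, hu⟩
        refine ⟨some (.inl u₀), ?_, (ihψ false u₀).mpr hu⟩
        show M₁.R a ({x | (glue M₁ M₂).sat φ true (some (Sum.inl x))},
            {x | (glue M₁ M₂).sat φ false (some (Sum.inl x))}) u₀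
        rwa [h1, h2]
    · constructor
      · intro h v₀ u₀ hle hR
        refine (ihψ true u₀).mp (h (some (.inl v₀)) (some (.inl u₀)) hle ?_)
        show M₁.R v₀ ({x | (glue M₁ M₂).sat φ true (some (Sum.inl x))},
            {x | (glue M₁ M₂).sat φ false (some (Sum.inl x))}) u₀
        rwa [h1, h2]
      · intro h v u hle hR
        rcases v with _ | (v₀ | v₀)
        · exact hle.elim
        · rcases u with _ | (u₀ | u₀)
          · exact hR.elim
          · refine (ihψ true u₀).mpr (h v₀ u₀ hle ?_)
            have hR' : M₁.R v₀ ({x | (glue M₁ M₂).sat φ true (some (Sum.inl x))},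
                {x | (glue M₁ M₂).sat φ false (some (Sum.inl x))}) u₀ := hR
            rwa [h1, h2] at hR'
          · exact hR.elim
        · exact hle.elim

theorem satInr (M₁ M₂ : CNModel) :
    ∀ (χ : CForm) (b : Bool) (a : M₂.W),
      (glue M₁ M₂).sat χ b (some (.inr a)) ↔ M₂.sat χ b a := by
  intro χ
  induction χ with
  | var n => intro b a; cases b <;> exact Iff.rfl
  | and φ ψ ihφ ihψ =>
    intro b a; cases b <;> simp only [CNModel.sat, ihφ, ihψ]
  | or φ ψ ihφ ihψ =>
    intro b a; cases b <;> simp only [CNModel.sat, ihφ, ihψ]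
  | neg φ ih =>
    intro b a; exact ih (!b) a
  | imp φ ψ ihφ ihψ =>
    intro b a; cases b
    · simp only [CNModel.sat, ihφ, ihψ]
    · constructor
      · intro h v₀ hle hφ
        exact (ihψ true v₀).mp (h (some (.inr v₀)) hle ((ihφ true v₀).mpr hφ))
      · intro h v hle hφ
        rcases v with _ | (v₀ | v₀)
        · exact hle.elim
        · exact hle.elim
        · exact (ihψ true v₀).mpr (h v₀ hle ((ihφ true v₀).mp hφ))
  | cond φ ψ ihφ ihψ =>
    intro b a
    have h1 : {x : M₂.W | (glue M₁ M₂).sat φ true (some (Sum.inr x))}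
        = {x | M₂.sat φ true x} := Set.ext fun x => ihφ true x
    have h2 : {x : M₂.W | (glue M₁ M₂).sat φ false (some (Sum.inr x))}
        = {x | M₂.sat φ false x} := Set.ext fun x => ihφ false x
    cases b
    · constructor
      · rintro ⟨u, hR, hu⟩
        rcases u with _ | (u₀ | u₀)
        · exact hR.elim
        · exact hR.elim
        · refine ⟨u₀, ?_, (ihψ false u₀).mp hu⟩
          have hR' : M₂.R a ({x | (glue M₁ M₂).sat φ true (some (Sum.inr x))},
              {x | (glue M₁ M₂).sat φ false (some (Sum.inr x))}) u₀ := hR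
          rwa [h1, h2] at hR'
      · rintro ⟨u₀, hR, hu⟩
        refine ⟨some (.inr u₀), ?_, (ihψ false u₀).mpr hu⟩
        show M₂.R a ({x | (glue M₁ M₂).sat φ true (some (Sum.inr x))},
            {x | (glue M₁ M₂).sat φ false (some (Sum.inr x))}) u₀
        rwa [h1, h2]
    · constructor
      · intro h v₀ u₀ hle hR
        refine (ihψ true u₀).mp (h (some (.inr v₀)) (some (.inr u₀)) hle ?_)
        show M₂.R v₀ ({x | (glue M₁ M₂).sat φ true (some (Sum.inr x))},
            {x | (glue M₁ M₂).sat φ false (some (Sum.inr x))}) u₀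
        rwa [h1, h2]
      · intro h v u hle hR
        rcases v with _ | (v₀ | v₀)
        · exact hle.elim
        · exact hle.elim
        · rcases u with _ | (u₀ | u₀)
          · exact hR.elim
          · exact hR.elim
          · refine (ihψ true u₀).mpr (h v₀ u₀ hle ?_)
            have hR' : M₂.R v₀ ({x | (glue M₁ M₂).sat φ true (some (Sum.inr x))},
                {x | (glue M₁ M₂).sat φ false (some (Sum.inr x))}) u₀ := hR
            rwa [h1, h2] at hR'

/-- N4CK has the Disjunction Property. -/
theorem n4ck_dp (φ ψ : CForm) :
    CValid (.or φ ψ) ↔ (CValid φ ∨ CValid ψ) := by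
  constructor
  · intro h
    by_contra hc
    push_neg at hc
    obtain ⟨hφ, hψ⟩ := hc
    simp only [CValid, not_forall] at hφ hψ
    obtain ⟨M₁, w₁, h₁⟩ := hφ
    obtain ⟨M₂, w₂, h₂⟩ := hψ
    have hroot := h (glue M₁ M₂) none
    rcases hroot with hr | hr
    · exact h₁ ((satInl M₁ M₂ φ true w₁).mp
        ((glue M₁ M₂).persist φ true (w := none) trivial hr))
    · exact h₂ ((satInr M₁ M₂ ψ true w₂).mp
        ((glue M₁ M₂).persist ψ true (w := none) trivial hr))
  · rintro (h | h) M w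
    · exact Or.inl (h M w)
    · exact Or.inr (h M w)
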